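/- Let α ∈ [0,1), let f(α) = 20 if α ∈ [0,1/2], f(α) = 25 if α ∈ (1/2,5/7], and f(α) = 7/(1−α) + 3 if α ∈ (5/7,1), and let n be an integer with n ≥ f(α). Then the A_α-spectral radius of the graph K₂ ∨ (K_{n−6} ∪ 4K₁) satisfies ρ_α(K₂ ∨ (K_{n−6} ∪ 4K₁)) < n − 3. -/

import Mathlib

open Finset

/-- The join `G ∨g H` of two graphs: the disjoint union together with all edges
between the two parts. -/
def SimpleGraph.gjoin {α β : Type*} (G : SimpleGraph α) (H : SimpleGraph β) :
    SimpleGraph (α ⊕ β) where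
  Adj u v := match u, v with
    | Sum.inl u, Sum.inl v => G.Adj u v
    | Sum.inr u, Sum.inr v => H.Adj u v
    | _, _ => True
  symm := ⟨fun u v => match u, v with
    | Sum.inl u, Sum.inl v => G.adj_symm
    | Sum.inr u, Sum.inr v => H.adj_symm
    | Sum.inl _, Sum.inr _ | Sum.inr _, Sum.inl _ => fun _ => trivial⟩
  loopless := ⟨fun u => by cases u <;> simp⟩

infixl:60 " ∨g " => SimpleGraph.gjoin

/-- The `A_α`-matrix `α • D(G) + (1-α) • A(G)` of a graph `G`. -/
noncomputable def aAlphaMatrix {V : Type*} [Fintype V] [DecidableEq V]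
    (α : ℝ) (G : SimpleGraph V) : Matrix V V ℝ := by
  classical
  exact α • Matrix.diagonal (fun v => (G.degree v : ℝ)) + (1 - α) • G.adjMatrix ℝ

/-- The `A_α`-spectral radius `ρ_α(G)`: the largest eigenvalue of `A_α(G)`. -/
noncomputable def rhoAlpha {V : Type*} [Fintype V] [DecidableEq V]
    (α : ℝ) (G : SimpleGraph V) : ℝ :=
  sSup (spectrum ℝ (aAlphaMatrix α G))

/-- The signless Laplacian matrix `Q(G) = D(G) + A(G)`. -/
noncomputable def signlessLaplacian {V : Type*} [Fintype V] [DecidableEq V]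
    (G : SimpleGraph V) : Matrix V V ℝ := by
  classical
  exact Matrix.diagonal (fun v => (G.degree v : ℝ)) + G.adjMatrix ℝ

/-- `q(G)`: the largest eigenvalue of the signless Laplacian matrix of `G`. -/
noncomputable def qIndex {V : Type*} [Fintype V] [DecidableEq V]
    (G : SimpleGraph V) : ℝ :=
  sSup (spectrum ℝ (signlessLaplacian G))

/-- The number of edges (the size) of a graph. -/
noncomputable def edgeCount {V : Type*} [Fintype V] [DecidableEq V]
    (G : SimpleGraph V) : ℕ := by
  classical
  exact G.edgeFinset.card

/-- `i(G - S)`: the number of isolated vertices of the graph obtained from `G`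
by deleting the vertices of `S` together with all edges incident to `S`. -/
noncomputable def isolGminus {V : Type*} [Fintype V] [DecidableEq V]
    (G : SimpleGraph V) (S : Finset V) : ℕ := by
  classical
  exact (Finset.univ.filter (fun v => v ∉ S ∧ ∀ u, G.Adj v u → u ∈ S)).card

/-- `F(n)`: the edge bound from Theorem 1.1. -/
def Fbound (n : ℕ) : ℕ :=
  if n = 6 then 9 else if n = 8 then 18 else (n - 2).choose 2 + 2

/-- `f(α)`: the order bound from Theorem 1.2. -/
noncomputable def fAlpha (α : ℝ) : ℝ :=
  if α ≤ 1 / 2 then 20 else if α ≤ 5 / 7 then 25 else 7 / (1 - α) + 3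

/-- The graph `K₂ ∨ (K_{n-6} ∪ 4K₁)`. -/
def G3 (n : ℕ) : SimpleGraph (Fin 2 ⊕ (Fin (n - 6) ⊕ Fin 4)) :=
  (⊤ : SimpleGraph (Fin 2)) ∨g ((⊤ : SimpleGraph (Fin (n - 6))) ⊕g (⊥ : SimpleGraph (Fin 4)))


section Aux

open Matrix

lemma sSup_spectrum_lt {V : Type*} [Fintype V] [DecidableEq V] [Nonempty V]
    (M : Matrix V V ℝ) (hM : ∀ i j, 0 ≤ M i j) (x : V → ℝ) (hx : ∀ i, 0 < x i)
    (t : ℝ) (hb : ∀ i, (M *ᵥ x) i < t * x i) :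
    sSup (spectrum ℝ M) < t := by
  classical
  have hMx0 : ∀ i, 0 ≤ (M *ᵥ x) i := fun i =>
    Finset.sum_nonneg fun j _ => mul_nonneg (hM i j) (hx j).le
  set c : ℝ := Finset.univ.sup' Finset.univ_nonempty (fun i => (M *ᵥ x) i / x i) with hc
  have hc_lt : c < t := by
    rw [hc, Finset.sup'_lt_iff]
    intro i _
    rw [div_lt_iff₀ (hx i)]
    exact hb i
  have hc0 : 0 ≤ c := by
    obtain ⟨i⟩ := ‹Nonempty V›
    exact le_trans (div_nonneg (hMx0 i) (hx i).le)
      (Finset.le_sup' (fun j => (M *ᵥ x) j / x j) (Finset.mem_univ i))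
  refine lt_of_le_of_lt (Real.sSup_le ?_ hc0) hc_lt
  intro μ hμ
  rw [spectrum.mem_iff] at hμ
  have hdet : ((μ • (1 : Matrix V V ℝ) - M)).det = 0 := by
    by_contra h
    exact hμ (by
      rw [Algebra.algebraMap_eq_smul_one]
      exact (Matrix.isUnit_iff_isUnit_det _).mpr (isUnit_iff_ne_zero.mpr h))
  obtain ⟨v, hv0, hv⟩ := (Matrix.exists_mulVec_eq_zero_iff).mpr hdet
  have hMv : M *ᵥ v = μ • v := by
    rw [Matrix.sub_mulVec, sub_eq_zero] at hv
    rw [← hv, Matrix.smul_mulVec, Matrix.one_mulVec]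
  have key : ∀ w : V → ℝ, M *ᵥ w = μ • w → (∃ k, 0 < w k) → μ ≤ c := by
    rintro w hw ⟨k, hk⟩
    obtain ⟨i, -, hi⟩ := Finset.exists_max_image Finset.univ (fun j => w j / x j)
      ⟨k, Finset.mem_univ k⟩
    have hik := hi k (Finset.mem_univ k)
    have hrk : 0 < w k / x k := div_pos hk (hx k)
    have hr : 0 < w i / x i := lt_of_lt_of_le hrk hik
    have hwi : 0 < w i := by
      by_contra h
      exact absurd (div_nonpos_of_nonpos_of_nonneg (not_lt.mp h) (hx i).le) (not_le.mpr hr)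
    have h1 : μ * w i ≤ (w i / x i) * (M *ᵥ x) i := by
      have e1 : μ * w i = (M *ᵥ w) i := by rw [hw]; simp [mul_comm]
      rw [e1]
      show ∑ j, M i j * w j ≤ (w i / x i) * ∑ j, M i j * x j
      rw [Finset.mul_sum]
      refine Finset.sum_le_sum fun j _ => ?_
      have hj : w j ≤ (w i / x i) * x j := by
        have h2 := hi j (Finset.mem_univ j)
        calc w j = (w j / x j) * x j := (div_mul_cancel₀ _ (hx j).ne').symm
          _ ≤ (w i / x i) * x j := mul_le_mul_of_nonneg_right h2 (hx j).le
      calc M i j * w j ≤ M i j * ((w i / x i) * x j) :=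
            mul_le_mul_of_nonneg_left hj (hM i j)
        _ = (w i / x i) * (M i j * x j) := by ring
    have hwix : (w i / x i) * x i = w i := div_mul_cancel₀ _ (hx i).ne'
    have h2 : μ ≤ (M *ᵥ x) i / x i := by
      rw [le_div_iff₀ (hx i)]
      refine le_of_mul_le_mul_left ?_ hr
      calc (w i / x i) * (μ * x i) = μ * ((w i / x i) * x i) := by ring
        _ = μ * w i := by rw [hwix]
        _ ≤ (w i / x i) * (M *ᵥ x) i := h1
    exact h2.trans (Finset.le_sup' (fun j => (M *ᵥ x) j / x j) (Finset.mem_univ i))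
  by_cases hpos : ∃ k, 0 < v k
  · exact key v hMv hpos
  · push_neg at hpos
    obtain ⟨k, hk⟩ := Function.ne_iff.mp hv0
    refine key (-v) ?_ ⟨k, ?_⟩
    · rw [Matrix.mulVec_neg, hMv, smul_neg]
    · simpa using lt_of_le_of_ne (hpos k) hk

lemma aAlpha_mulVec {V : Type*} [Fintype V] [DecidableEq V] (α : ℝ) (G : SimpleGraph V)
    [DecidableRel G.Adj] (x : V → ℝ) (i : V) :
    (aAlphaMatrix α G *ᵥ x) i
      = α * (G.degree i) * x i + (1-α) * ∑ j ∈ G.neighborFinset i, x j := by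
  classical
  rw [aAlphaMatrix]
  rw [Matrix.add_mulVec, Pi.add_apply, Matrix.smul_mulVec, Matrix.smul_mulVec]
  rw [Pi.smul_apply, Pi.smul_apply, Matrix.mulVec_diagonal, SimpleGraph.adjMatrix_mulVec_apply]
  simp [mul_assoc]
  congr!

lemma degree_cast {V : Type*} [Fintype V] [DecidableEq V] (G : SimpleGraph V)
    [DecidableRel G.Adj] (i : V) :
    ((G.degree i : ℕ) : ℝ) = ∑ j, if G.Adj i j then (1:ℝ) else 0 := by
  rw [← SimpleGraph.card_neighborFinset_eq_degree, SimpleGraph.neighborFinset_eq_filter,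
    Finset.card_filter]
  push_cast
  rfl

lemma nbr_sum {V : Type*} [Fintype V] [DecidableEq V] (G : SimpleGraph V)
    [DecidableRel G.Adj] (x : V → ℝ) (i : V) :
    ∑ j ∈ G.neighborFinset i, x j = ∑ j, if G.Adj i j then x j else 0 := by
  rw [SimpleGraph.neighborFinset_eq_filter, Finset.sum_filter]

lemma fin_sum_ne (m : ℕ) (u : Fin m) (c : ℝ) :
    ∑ v : Fin m, (if u ≠ v then c else 0) = ((m:ℝ) - 1) * c := by
  have h : ∀ v : Fin m, (if u ≠ v then c else 0) = c - (if u = v then c else 0) := by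
    intro v; by_cases h : u = v <;> simp [h]
  rw [Finset.sum_congr rfl fun v _ => h v, Finset.sum_sub_distrib, Finset.sum_ite_eq]
  simp [mul_comm]
  ring

variable {n : ℕ}

lemma G3_adj_ll (u v : Fin 2) : (G3 n).Adj (.inl u) (.inl v) ↔ u ≠ v := Iff.rfl

lemma G3_adj_lr (u : Fin 2) (p : Fin (n-6) ⊕ Fin 4) : (G3 n).Adj (.inl u) (.inr p) := by
  cases p <;> trivial

lemma G3_adj_rl (p : Fin (n-6) ⊕ Fin 4) (u : Fin 2) : (G3 n).Adj (.inr p) (.inl u) := by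
  cases p <;> trivial

lemma G3_adj_rr_ll (w w' : Fin (n-6)) :
    (G3 n).Adj (.inr (.inl w)) (.inr (.inl w')) ↔ w ≠ w' := by
  simp [G3, SimpleGraph.gjoin]

lemma G3_adj_rr_lr (w : Fin (n-6)) (z : Fin 4) :
    ¬ (G3 n).Adj (.inr (.inl w)) (.inr (.inr z)) := by
  simp [G3, SimpleGraph.gjoin]

lemma G3_adj_rr_rl (z : Fin 4) (w : Fin (n-6)) :
    ¬ (G3 n).Adj (.inr (.inr z)) (.inr (.inl w)) := by
  simp [G3, SimpleGraph.gjoin]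

lemma G3_adj_rr_rr (z z' : Fin 4) :
    ¬ (G3 n).Adj (.inr (.inr z)) (.inr (.inr z')) := by
  simp [G3, SimpleGraph.gjoin]

lemma ineq1 (α N : ℝ) (hα0 : 0 ≤ α) (hα1 : α < 1) (hN : 20 ≤ N)
    (hcase : (α ≤ 1/2) ∨ (1/2 < α ∧ α ≤ 5/7 ∧ 25 ≤ N) ∨ (5/7 < α ∧ 7 ≤ (1-α)*(N-3))) :
    α*(N-1)*(N-5) + (1-α)*((N-5) + (N-6)*((1-α)*(N-5)) + 4*(4*(1-α))) < (N-3)*(N-5) := by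
  rcases hcase with h | ⟨h0, h1, h2⟩ | ⟨h1, h2⟩
  · nlinarith [mul_nonneg hα0 (sub_nonneg.mpr h), sq_nonneg (1-α),
      mul_nonneg (mul_nonneg hα0 (sub_nonneg.mpr h)) (sub_nonneg.mpr hN),
      mul_nonneg hα0 (sub_nonneg.mpr hN), mul_nonneg (sub_nonneg.mpr h) (sub_nonneg.mpr hN)]
  · nlinarith [mul_nonneg (sub_nonneg.mpr h1) (by linarith : (0:ℝ) ≤ α - 1/2),
      mul_nonneg (mul_nonneg (sub_nonneg.mpr h1) (by linarith : (0:ℝ) ≤ α - 1/2))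
        (by linarith : (0:ℝ) ≤ N - 25),
      mul_nonneg (sub_nonneg.mpr h1) (by linarith : (0:ℝ) ≤ N - 25),
      mul_nonneg (by linarith : (0:ℝ) ≤ α - 1/2) (by linarith : (0:ℝ) ≤ N - 25)]
  · have hb0 : (0:ℝ) < 1 - α := by linarith
    have hb27 : 1 - α < 2/7 := by linarith
    have hN27 : 25 ≤ N := by nlinarith
    nlinarith [mul_nonneg (mul_nonneg hb0.le (by linarith : (0:ℝ) ≤ 2/7 - (1-α)))
        (mul_nonneg (by linarith : (0:ℝ) ≤ N-6) (by linarith : (0:ℝ) ≤ N-5)),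
      mul_nonneg (by linarith : (0:ℝ) ≤ (1-α)*(N-3) - 7) (by linarith : (0:ℝ) ≤ N-5),
      mul_nonneg hb0.le (by linarith : (0:ℝ) ≤ N-5),
      mul_nonneg hb0.le hb0.le]

end Aux

theorem rhoAlpha_G3_lt (α : ℝ) (hα0 : 0 ≤ α) (hα1 : α < 1)
    (n : ℕ) (hn : fAlpha α ≤ (n : ℝ)) :
    rhoAlpha α (G3 n) < (n : ℝ) - 3 := by
  classical
  have hβ0 : (0:ℝ) < 1 - α := by linarith
  set N := (n : ℝ) with hNdef
  have hcase : (α ≤ 1/2 ∧ 20 ≤ N) ∨ (1/2 < α ∧ α ≤ 5/7 ∧ 25 ≤ N)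
      ∨ (5/7 < α ∧ 7 ≤ (1-α)*(N-3)) := by
    rw [fAlpha] at hn
    by_cases h1 : α ≤ 1/2
    · left; exact ⟨h1, by rwa [if_pos h1] at hn⟩
    · rw [if_neg h1] at hn
      by_cases h2 : α ≤ 5/7
      · right; left; exact ⟨not_le.mp h1, h2, by rwa [if_pos h2] at hn⟩
      · right; right
        rw [if_neg h2] at hn
        refine ⟨not_le.mp h2, ?_⟩
        have h3 : 7 / (1-α) ≤ N - 3 := by linarith
        calc (7:ℝ) = 7/(1-α) * (1-α) := by field_simp
          _ ≤ (N-3)*(1-α) := by nlinarith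
          _ = (1-α)*(N-3) := by ring
  have hN20 : 20 ≤ N := by
    rcases hcase with ⟨_, h⟩ | ⟨_, _, h⟩ | ⟨h1, h2⟩
    · exact h
    · linarith
    · nlinarith
  have hcase' : (α ≤ 1/2) ∨ (1/2 < α ∧ α ≤ 5/7 ∧ 25 ≤ N) ∨ (5/7 < α ∧ 7 ≤ (1-α)*(N-3)) := by
    tauto
  have h6 : 6 ≤ n := by
    have h6' : (6:ℝ) ≤ (n:ℝ) := by rw [← hNdef]; linarith
    exact_mod_cast h6'
  have hcast : ((n - 6 : ℕ) : ℝ) = N - 6 := by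
    rw [Nat.cast_sub h6, hNdef]; norm_num
  haveI : Nonempty (Fin 2 ⊕ (Fin (n-6) ⊕ Fin 4)) := ⟨Sum.inl 0⟩
  set x : Fin 2 ⊕ (Fin (n - 6) ⊕ Fin 4) → ℝ :=
    Sum.elim (fun _ => N - 5) (Sum.elim (fun _ => (1-α)*(N-5)) (fun _ => 4*(1-α))) with hxdef
  rw [rhoAlpha]
  refine sSup_spectrum_lt _ ?_ x ?_ (N - 3) ?_
  · intro i j
    rw [aAlphaMatrix]
    simp only [Matrix.add_apply, Matrix.smul_apply, smul_eq_mul, Matrix.diagonal_apply]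
    apply add_nonneg
    · split_ifs
      · positivity
      · simp
    · apply mul_nonneg hβ0.le
      simp only [SimpleGraph.adjMatrix_apply]
      split_ifs <;> norm_num
  · rintro (u | (w | z)) <;> simp [hxdef] <;> nlinarith
  · rintro (u | (w | z))
    · rw [aAlpha_mulVec]
      have hdeg : (((G3 n).degree (Sum.inl u) : ℕ) : ℝ) = N - 1 := by
        rw [degree_cast, Fintype.sum_sum_type, Fintype.sum_sum_type]
        simp only [G3_adj_ll, G3_adj_lr, if_true]
        rw [fin_sum_ne]
        simp only [Finset.sum_const, Finset.card_univ, Fintype.card_fin, nsmul_eq_mul,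
          smul_eq_mul, Finset.sum_const_zero, mul_zero, add_zero, mul_one, if_false]
        rw [hcast]
        push_cast
        ring
      have hsum : ∑ j ∈ (G3 n).neighborFinset (Sum.inl u), x j
          = (N-5) + (N-6)*((1-α)*(N-5)) + 4*(4*(1-α)) := by
        rw [nbr_sum, Fintype.sum_sum_type, Fintype.sum_sum_type]
        simp only [G3_adj_ll, G3_adj_lr, if_true, hxdef, Sum.elim_inl, Sum.elim_inr]
        rw [fin_sum_ne]
        simp only [Finset.sum_const, Finset.card_univ, Fintype.card_fin, nsmul_eq_mul,
          smul_eq_mul, Finset.sum_const_zero, mul_zero, add_zero, mul_one, if_false]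
        rw [hcast]
        push_cast
        ring
      rw [hdeg, hsum]
      show α*(N-1)*(N-5) + (1-α)*((N-5) + (N-6)*((1-α)*(N-5)) + 4*(4*(1-α))) < (N-3)*(N-5)
      exact ineq1 α N hα0 hα1 hN20 hcase'
    · rw [aAlpha_mulVec]
      have hdeg : (((G3 n).degree (Sum.inr (Sum.inl w)) : ℕ) : ℝ) = N - 5 := by
        rw [degree_cast, Fintype.sum_sum_type, Fintype.sum_sum_type]
        simp only [G3_adj_rl, G3_adj_rr_ll, G3_adj_rr_lr, if_true, if_false]
        rw [fin_sum_ne]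
        simp only [Finset.sum_const, Finset.card_univ, Fintype.card_fin, nsmul_eq_mul,
          smul_eq_mul, Finset.sum_const_zero, mul_zero, add_zero, mul_one, if_false]
        rw [hcast]
        push_cast
        ring
      have hsum : ∑ j ∈ (G3 n).neighborFinset (Sum.inr (Sum.inl w)), x j
          = 2*(N-5) + (N-7)*((1-α)*(N-5)) := by
        rw [nbr_sum, Fintype.sum_sum_type, Fintype.sum_sum_type]
        simp only [G3_adj_rl, G3_adj_rr_ll, G3_adj_rr_lr, if_true, if_false, hxdef,
          Sum.elim_inl, Sum.elim_inr]
        rw [fin_sum_ne]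
        simp only [Finset.sum_const, Finset.card_univ, Fintype.card_fin, nsmul_eq_mul,
          smul_eq_mul, Finset.sum_const_zero, mul_zero, add_zero, mul_one, if_false]
        rw [hcast]
        push_cast
        ring
      rw [hdeg, hsum]
      show α*(N-5)*((1-α)*(N-5)) + (1-α)*(2*(N-5) + (N-7)*((1-α)*(N-5)))
          < (N-3)*((1-α)*(N-5))
      nlinarith [mul_pos (mul_pos hβ0 (by linarith : (0:ℝ) < N - 5))
        (by linarith : (0:ℝ) < 2 - 2*α)]
    · rw [aAlpha_mulVec]
      have hdeg : (((G3 n).degree (Sum.inr (Sum.inr z)) : ℕ) : ℝ) = 2 := by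
        rw [degree_cast, Fintype.sum_sum_type, Fintype.sum_sum_type]
        simp only [G3_adj_rl, G3_adj_rr_rl, G3_adj_rr_rr, if_true, if_false]
        simp
      have hsum : ∑ j ∈ (G3 n).neighborFinset (Sum.inr (Sum.inr z)), x j
          = 2*(N-5) := by
        rw [nbr_sum, Fintype.sum_sum_type, Fintype.sum_sum_type]
        simp only [G3_adj_rl, G3_adj_rr_rl, G3_adj_rr_rr, if_true, if_false, hxdef,
          Sum.elim_inl, Sum.elim_inr, Finset.sum_const, Finset.card_univ, Fintype.card_fin,
          nsmul_eq_mul, Finset.sum_const_zero, mul_zero, add_zero, mul_one]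
        push_cast
        ring
      rw [hdeg, hsum]
      show α*2*(4*(1-α)) + (1-α)*(2*(N-5)) < (N-3)*(4*(1-α))
      nlinarith [mul_pos hβ0 (by linarith : (0:ℝ) < 2*N - 2 - 8*α)]
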